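/- For n ≥ 1 and α > -1, the n-th coefficient of the series f(t) = 1 + ∑ t^{n(α+2)}/c_n, with c_n = ∏_{k=1}^n (k(α+2)-1)(k(α+2)), satisfies c_n ≥ (α+1)(α+2) · ((α+2)/2)^{2(n-1)} · ((n-1)!)², which implies each tail term is bounded by the corresponding term of (t^{α+2}/((α+1)(α+2))) · (∑_m (2 t^{(α+2)/2}/(α+2))^{m}/m!)². -/

import Mathlib

theorem stmt_9 (α : ℝ) (hα : -1 < α)
    (c : ℕ → ℝ)
    (hc : ∀ n, c n = ∏ k ∈ Finset.Icc 1 n, (((k : ℝ) * (α + 2) - 1) * ((k : ℝ) * (α + 2)))) :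
    ∀ n : ℕ, 1 ≤ n →
      ((α + 1) * (α + 2) * ((α + 2) / 2) ^ (2 * (n - 1)) *
          ((Nat.factorial (n - 1) : ℝ)) ^ 2 ≤ c n) ∧
        ∀ t : ℝ, 0 ≤ t →
          t ^ ((n : ℝ) * (α + 2)) / c n ≤
            t ^ (α + 2) / ((α + 1) * (α + 2)) *
              ((2 * t ^ ((α + 2) / 2) / (α + 2)) ^ (n - 1) /
                (Nat.factorial (n - 1) : ℝ)) ^ 2 := by
  have hA : (0:ℝ) < α + 2 := by linarith
  have h1 : (0:ℝ) < α + 1 := by linarith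
  have key : ∀ m : ℕ, (α + 1) * (α + 2) * ((α + 2) / 2) ^ (2 * m) *
      ((Nat.factorial m : ℝ)) ^ 2 ≤ c (m + 1) := by
    intro m
    induction m with
    | zero =>
        rw [hc]
        simp [Finset.Icc_self]
        ring_nf
        try rfl
    | succ m ih =>
        have hstep : c (m + 1 + 1) = c (m + 1) *
            ((((m:ℝ) + 2) * (α + 2) - 1) * (((m:ℝ) + 2) * (α + 2))) := by
          rw [hc, hc, Finset.prod_Icc_succ_top (by omega)]
          push_cast
          ring
        have hQ : ((α + 2) / 2 * ((m:ℝ) + 1)) ^ 2 ≤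
            (((m:ℝ) + 2) * (α + 2) - 1) * (((m:ℝ) + 2) * (α + 2)) := by
          have hm : (0:ℝ) ≤ (m:ℝ) := Nat.cast_nonneg m
          have hA1 : (1:ℝ) ≤ α + 2 := by linarith
          have h2 : ((m:ℝ) + 1) * (α + 2) ≤ ((m:ℝ) + 2) * (α + 2) - 1 := by nlinarith
          have h3 : ((m:ℝ) + 1) * (α + 2) ≤ ((m:ℝ) + 2) * (α + 2) := by nlinarith
          have hpos : (0:ℝ) ≤ ((m:ℝ) + 1) * (α + 2) := by positivity
          have h4 : (0:ℝ) ≤ ((m:ℝ) + 2) * (α + 2) - 1 := le_trans hpos h2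
          nlinarith [mul_le_mul h2 h3 hpos h4, sq_nonneg (((m:ℝ) + 1) * (α + 2))]
        have hP : (0:ℝ) < (α + 1) * (α + 2) * ((α + 2) / 2) ^ (2 * m) *
            ((Nat.factorial m : ℝ)) ^ 2 := by
          have := Nat.factorial_pos m
          positivity
        have hmul := mul_le_mul ih hQ (by positivity) (le_trans hP.le ih)
        calc (α + 1) * (α + 2) * ((α + 2) / 2) ^ (2 * (m + 1)) *
              ((Nat.factorial (m + 1) : ℝ)) ^ 2
            = ((α + 1) * (α + 2) * ((α + 2) / 2) ^ (2 * m) *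
              ((Nat.factorial m : ℝ)) ^ 2) * (((α + 2) / 2 * ((m:ℝ) + 1)) ^ 2) := by
              rw [Nat.factorial_succ]
              push_cast
              ring
          _ ≤ c (m + 1) * ((((m:ℝ) + 2) * (α + 2) - 1) * (((m:ℝ) + 2) * (α + 2))) := hmul
          _ = c (m + 1 + 1) := hstep.symm
  intro n hn
  obtain ⟨m, rfl⟩ : ∃ m, n = m + 1 := ⟨n - 1, by omega⟩
  simp only [Nat.add_sub_cancel]
  refine ⟨key m, ?_⟩
  intro t ht
  have hB : (0:ℝ) < (α + 1) * (α + 2) * ((α + 2) / 2) ^ (2 * m) *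
      ((Nat.factorial m : ℝ)) ^ 2 := by
    have := Nat.factorial_pos m
    positivity
  have hu : (0:ℝ) ≤ t ^ ((α + 2) / 2) := Real.rpow_nonneg ht _
  have ht1 : t ^ (α + 2) = (t ^ ((α + 2) / 2)) ^ (2:ℕ) := by
    rw [← Real.rpow_natCast (t ^ ((α + 2) / 2)) 2, ← Real.rpow_mul ht]
    norm_num
  have ht2 : t ^ ((((m:ℕ) + 1 : ℕ) : ℝ) * (α + 2)) = (t ^ ((α + 2) / 2)) ^ (2 * (m + 1)) := by
    rw [← Real.rpow_natCast (t ^ ((α + 2) / 2)) (2 * (m + 1)), ← Real.rpow_mul ht]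
    push_cast
    ring_nf
  rw [ht1, ht2]
  have hfac : (0:ℝ) < (Nat.factorial m : ℝ) := by exact_mod_cast Nat.factorial_pos m
  have hRHS : (t ^ ((α + 2) / 2)) ^ (2:ℕ) / ((α + 1) * (α + 2)) *
      ((2 * t ^ ((α + 2) / 2) / (α + 2)) ^ m / (Nat.factorial m : ℝ)) ^ 2 =
      (t ^ ((α + 2) / 2)) ^ (2 * (m + 1)) / ((α + 1) * (α + 2) * ((α + 2) / 2) ^ (2 * m) *
      ((Nat.factorial m : ℝ)) ^ 2) := by
    rw [div_pow (α + 2) 2 (2 * m), div_pow (2 * t ^ ((α + 2) / 2)) (α + 2) m]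
    field_simp
    ring
  rw [hRHS]
  exact div_le_div_of_nonneg_left (by positivity) hB (key m)
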